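/- arXiv:2311.01824 — 3 statements merged into one kernel-verified Lean document; each statement's English description precedes it below -/
import Mathlib

section
/- Let m ≥ 1 and β ∈ ℝ^m. The flow distance d_Z is equivalent to the Carnot–Carathéodory distance d_G: there exists a constant D ≥ 1 (depending on β) such that D^{-1} d_Z(x,y) ≤ d_G(x,y) ≤ D d_Z(x,y) for all x, y ∈ G. -/
/-- The inverse hyperbolic cosine. -/
noncomputable def arcosh (x : ℝ) : ℝ := Real.log (x + Real.sqrt (x ^ 2 - 1))

/-- The Carnot–Carathéodory distance on `G = ℝ^m × (0,∞)`, given explicitly by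
`d_G((n,a),(n',a')) = arcosh( cosh(log(a/a')) + |n − n'|²/(2 a a') )`. -/
noncomputable def dG {m : ℕ} (x y : EuclideanSpace ℝ (Fin m) × ℝ) : ℝ :=
  arcosh (Real.cosh (Real.log (x.2 / y.2)) + ‖x.1 - y.1‖ ^ 2 / (2 * x.2 * y.2))

/-- The flow distance `d_Z` associated with `β ∈ ℝ^m`:
`d_Z((n,a),(n',a')) = d_G((n − (a−1)β, a), (n' − (a'−1)β, a'))`. -/
noncomputable def dZ {m : ℕ} (β : EuclideanSpace ℝ (Fin m))
    (x y : EuclideanSpace ℝ (Fin m) × ℝ) : ℝ :=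
  dG (x.1 - (x.2 - 1) • β, x.2) (y.1 - (y.2 - 1) • β, y.2)

lemma sinh_nonneg' {t : ℝ} (ht : 0 ≤ t) : 0 ≤ Real.sinh t := by
  have := Real.sinh_le_sinh.mpr ht
  simpa using this

lemma arcosh_cosh {t : ℝ} (ht : 0 ≤ t) : arcosh (Real.cosh t) = t := by
  unfold arcosh
  have h1 : Real.cosh t ^ 2 - 1 = Real.sinh t ^ 2 := by
    have := Real.cosh_sq t; linarith
  rw [h1, Real.sqrt_sq (sinh_nonneg' ht), Real.cosh_add_sinh, Real.log_exp]

lemma cosh_arcosh {x : ℝ} (hx : 1 ≤ x) : Real.cosh (arcosh x) = x := by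
  unfold arcosh
  have h0 : (0:ℝ) ≤ x ^ 2 - 1 := by nlinarith
  have hs : Real.sqrt (x ^ 2 - 1) ^ 2 = x ^ 2 - 1 := Real.sq_sqrt h0
  have hs0 : 0 ≤ Real.sqrt (x ^ 2 - 1) := Real.sqrt_nonneg _
  have hz : 0 < x + Real.sqrt (x ^ 2 - 1) := by nlinarith
  rw [Real.cosh_eq, Real.exp_log hz, Real.exp_neg, Real.exp_log hz]
  field_simp
  nlinarith [hs]

lemma arcosh_le_arcosh {a b : ℝ} (ha : 1 ≤ a) (hab : a ≤ b) : arcosh a ≤ arcosh b := by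
  unfold arcosh
  have ha0 : 0 < a + Real.sqrt (a ^ 2 - 1) := by
    have := Real.sqrt_nonneg (a ^ 2 - 1); nlinarith
  apply Real.log_le_log ha0
  have : Real.sqrt (a ^ 2 - 1) ≤ Real.sqrt (b ^ 2 - 1) := by
    apply Real.sqrt_le_sqrt; nlinarith
  linarith

lemma arcosh_nonneg {x : ℝ} (hx : 1 ≤ x) : 0 ≤ arcosh x := by
  unfold arcosh
  apply Real.log_nonneg
  have := Real.sqrt_nonneg (x ^ 2 - 1); linarith

lemma nat_mul_sinh_le (n : ℕ) {t : ℝ} (ht : 0 ≤ t) :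
    (n : ℝ) * Real.sinh t ≤ Real.sinh ((n : ℝ) * t) := by
  induction n with
  | zero => simp
  | succ k ih =>
    have h1 : ((k : ℝ) + 1) * t = (k : ℝ) * t + t := by ring
    push_cast
    rw [h1, Real.sinh_add]
    have hck : 1 ≤ Real.cosh ((k : ℝ) * t) := Real.one_le_cosh _
    have hct : 1 ≤ Real.cosh t := Real.one_le_cosh _
    have hst : 0 ≤ Real.sinh t := sinh_nonneg' ht
    have hsk : 0 ≤ Real.sinh ((k : ℝ) * t) := sinh_nonneg' (by positivity)
    nlinarith

lemma cosh_sub_one_mul (n : ℕ) {t : ℝ} (ht : 0 ≤ t) :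
    (n : ℝ) ^ 2 * (Real.cosh t - 1) ≤ Real.cosh ((n : ℝ) * t) - 1 := by
  have key : ∀ s : ℝ, Real.cosh s = 2 * Real.sinh (s / 2) ^ 2 + 1 := by
    intro s
    have h1 : Real.cosh (2 * (s / 2)) = Real.cosh (s / 2) ^ 2 + Real.sinh (s / 2) ^ 2 :=
      Real.cosh_two_mul _
    have h2 : Real.cosh (s / 2) ^ 2 = Real.sinh (s / 2) ^ 2 + 1 := Real.cosh_sq _
    have : 2 * (s / 2) = s := by ring
    rw [this] at h1
    linarith
  rw [key t, key ((n : ℝ) * t)]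
  have h3 : (n : ℝ) * t / 2 = (n : ℝ) * (t / 2) := by ring
  rw [h3]
  have h4 := nat_mul_sinh_le n (t := t / 2) (by linarith)
  have h5 : 0 ≤ Real.sinh (t / 2) := sinh_nonneg' (by linarith)
  have h6 : ((n : ℝ) * Real.sinh (t / 2)) ^ 2 ≤ Real.sinh ((n : ℝ) * (t / 2)) ^ 2 :=
    pow_le_pow_left₀ (by positivity) h4 2
  nlinarith [h6]

lemma arcosh_one_add_mul_le {C s : ℝ} (hC : 0 ≤ C) (hs : 0 ≤ s) (n : ℕ)
    (hn : C ≤ (n : ℝ) ^ 2) : arcosh (1 + C * s) ≤ (n : ℝ) * arcosh (1 + s) := by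
  set t := arcosh (1 + s) with htdef
  have ht0 : 0 ≤ t := arcosh_nonneg (by linarith)
  have hct : Real.cosh t = 1 + s := cosh_arcosh (by linarith)
  have h1 : 1 + C * s ≤ Real.cosh ((n : ℝ) * t) := by
    have h2 := cosh_sub_one_mul n ht0
    have h3 : C * s ≤ (n : ℝ) ^ 2 * s := mul_le_mul_of_nonneg_right hn hs
    nlinarith
  calc arcosh (1 + C * s) ≤ arcosh (Real.cosh ((n : ℝ) * t)) :=
        arcosh_le_arcosh (by nlinarith) h1
    _ = (n : ℝ) * t := arcosh_cosh (by positivity)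

set_option maxHeartbeats 1000000

/-- the flow distance `d_Z` is equivalent to the Carnot–Carathéodory distance
`d_G`: there is a constant `D ≥ 1` (depending on `β`) such that
`D⁻¹ d_Z(x,y) ≤ d_G(x,y) ≤ D d_Z(x,y)` for all `x, y ∈ G`. -/
theorem dZ_equiv_dG (m : ℕ) (hm : 1 ≤ m) (β : EuclideanSpace ℝ (Fin m)) :
    ∃ D : ℝ, 1 ≤ D ∧ ∀ x y : EuclideanSpace ℝ (Fin m) × ℝ, 0 < x.2 → 0 < y.2 →
      D⁻¹ * dZ β x y ≤ dG x y ∧ dG x y ≤ D * dZ β x y := by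
  set B : ℝ := ‖β‖ with hB
  have hB0 : 0 ≤ B := norm_nonneg _
  set C : ℝ := 2 + 2 * B ^ 2 with hC
  have hC2 : 2 ≤ C := by nlinarith
  set n : ℕ := ⌈C⌉₊ with hn
  have hCn : C ≤ (n : ℝ) := Nat.le_ceil C
  have hD1 : (1 : ℝ) ≤ (n : ℝ) := by linarith
  have hCn2 : C ≤ (n : ℝ) ^ 2 := by nlinarith
  refine ⟨(n : ℝ), hD1, fun x y ha hb => ?_⟩
  set a := x.2
  set b := y.2
  set w : ℝ := Real.cosh (Real.log (a / b)) - 1 with hwdef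
  set u' : ℝ := ‖x.1 - y.1‖ ^ 2 with hu'
  set v' : ℝ := ‖x.1 - (a - 1) • β - (y.1 - (b - 1) • β)‖ ^ 2 with hv'
  have hab : (0 : ℝ) < 2 * a * b := by positivity
  have hw : w = (a - b) ^ 2 / (2 * a * b) := by
    rw [hwdef, Real.cosh_eq, Real.exp_log (by positivity), Real.exp_neg,
      Real.exp_log (by positivity)]
    field_simp
    ring
  have hw0 : 0 ≤ w := by rw [hw]; positivity
  have hu0 : 0 ≤ u' := sq_nonneg _
  have hv0 : 0 ≤ v' := sq_nonneg _
  -- the vector identity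
  have hvec : x.1 - (a - 1) • β - (y.1 - (b - 1) • β) = x.1 - y.1 - (a - b) • β := by
    rw [sub_smul, sub_smul, sub_smul, one_smul]
    abel
  have hnorm_smul : ‖(a - b) • β‖ = |a - b| * B := by
    rw [norm_smul, Real.norm_eq_abs]
  -- v' ≤ 2 u' + 2 B² (a-b)²
  have hv_le : v' ≤ 2 * u' + 2 * B ^ 2 * (a - b) ^ 2 := by
    have h1 : ‖x.1 - (a - 1) • β - (y.1 - (b - 1) • β)‖ ≤ ‖x.1 - y.1‖ + |a - b| * B := by
      rw [hvec, ← hnorm_smul]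
      exact norm_sub_le _ _
    have h2 := norm_nonneg (x.1 - (a - 1) • β - (y.1 - (b - 1) • β))
    have h3 := norm_nonneg (x.1 - y.1)
    have h4 : (0:ℝ) ≤ |a - b| * B := by positivity
    have h5 : |a - b| ^ 2 = (a - b) ^ 2 := sq_abs _
    rw [hv', hu']
    nlinarith [sq_nonneg (‖x.1 - y.1‖ - |a - b| * B)]
  -- u' ≤ 2 v' + 2 B² (a-b)²
  have hu_le : u' ≤ 2 * v' + 2 * B ^ 2 * (a - b) ^ 2 := by
    have hvec2 : x.1 - y.1 = x.1 - (a - 1) • β - (y.1 - (b - 1) • β) + (a - b) • β := by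
      rw [hvec]; abel
    have h1 : ‖x.1 - y.1‖ ≤ ‖x.1 - (a - 1) • β - (y.1 - (b - 1) • β)‖ + |a - b| * B := by
      rw [hvec2, ← hnorm_smul]
      exact norm_add_le _ _
    have h2 := norm_nonneg (x.1 - (a - 1) • β - (y.1 - (b - 1) • β))
    have h3 := norm_nonneg (x.1 - y.1)
    have h4 : (0:ℝ) ≤ |a - b| * B := by positivity
    have h5 : |a - b| ^ 2 = (a - b) ^ 2 := sq_abs _
    rw [hv', hu']
    nlinarith [sq_nonneg (‖x.1 - (a - 1) • β - (y.1 - (b - 1) • β)‖ - |a - b| * B)]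
  set u : ℝ := u' / (2 * a * b) with hudiv
  set v : ℝ := v' / (2 * a * b) with hvdiv
  have hu0' : 0 ≤ u := by rw [hudiv]; exact div_nonneg hu0 hab.le
  have hv0' : 0 ≤ v := by rw [hvdiv]; exact div_nonneg hv0 hab.le
  have hG : dG x y = arcosh (1 + (w + u)) := by
    unfold dG
    congr 1
    rw [hwdef, hudiv, hu']
    ring
  have hZ : dZ β x y = arcosh (1 + (w + v)) := by
    unfold dZ dG
    congr 1
    rw [hwdef, hvdiv, hv']
    ring
  -- comparisons of arguments
  have hcomp1 : w + v ≤ C * (w + u) := by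
    have h1 : v ≤ (2 * u' + 2 * B ^ 2 * (a - b) ^ 2) / (2 * a * b) := by
      rw [hvdiv]
      exact (div_le_div_iff_of_pos_right hab).mpr hv_le
    have h2 : (2 * u' + 2 * B ^ 2 * (a - b) ^ 2) / (2 * a * b)
        = 2 * u + 2 * B ^ 2 * ((a - b) ^ 2 / (2 * a * b)) := by
      rw [hudiv]; ring
    rw [h2, ← hw] at h1
    nlinarith
  have hcomp2 : w + u ≤ C * (w + v) := by
    have h1 : u ≤ (2 * v' + 2 * B ^ 2 * (a - b) ^ 2) / (2 * a * b) := by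
      rw [hudiv]
      exact (div_le_div_iff_of_pos_right hab).mpr hu_le
    have h2 : (2 * v' + 2 * B ^ 2 * (a - b) ^ 2) / (2 * a * b)
        = 2 * v + 2 * B ^ 2 * ((a - b) ^ 2 / (2 * a * b)) := by
      rw [hvdiv]; ring
    rw [h2, ← hw] at h1
    nlinarith
  have hkey1 : dZ β x y ≤ (n : ℝ) * dG x y := by
    rw [hZ, hG]
    calc arcosh (1 + (w + v)) ≤ arcosh (1 + C * (w + u)) :=
          arcosh_le_arcosh (by linarith) (by linarith)
      _ ≤ (n : ℝ) * arcosh (1 + (w + u)) :=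
          arcosh_one_add_mul_le (by linarith) (by linarith) n hCn2
  have hkey2 : dG x y ≤ (n : ℝ) * dZ β x y := by
    rw [hZ, hG]
    calc arcosh (1 + (w + u)) ≤ arcosh (1 + C * (w + v)) :=
          arcosh_le_arcosh (by linarith) (by linarith)
      _ ≤ (n : ℝ) * arcosh (1 + (w + v)) :=
          arcosh_one_add_mul_le (by linarith) (by linarith) n hCn2
  constructor
  · rw [inv_mul_le_iff₀ (by linarith)]
    exact hkey1
  · exact hkey2
end

section
/- Let m ≥ 1, β ∈ ℝ^m, and let μ be a Z-flow measure on G with associated measure μ_N on ℝ^m. Then for every Borel set E ⊆ ℝ^m, every r > 1 and every a > 0, the cylinder P_{r,E}(a) satisfies μ(P_{r,E}(a)) = 2 (log r) · μ_N(E). -/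
open MeasureTheory
open scoped ENNReal NNReal

/-- The right Haar measure `dρ(n,a) = a⁻¹ dn da` of `G = ℝ^m × (0,∞)`, viewed as a measure
on `ℝ^m × ℝ` concentrated on `a > 0`. -/
noncomputable def rhoG (m : ℕ) : Measure (EuclideanSpace ℝ (Fin m) × ℝ) :=
  (volume : Measure (EuclideanSpace ℝ (Fin m) × ℝ)).withDensity
    (fun x => if 0 < x.2 then ENNReal.ofReal x.2⁻¹ else 0)

/-- `φ` is the density of a `Z`-flow measure for `Z = X₀ + Σᵢ βᵢ X_{1,i}`:
`φ(n + a(e^t−1)β, a e^t) = φ(n,a)` for all `(n,a) ∈ G` and `t ∈ ℝ`. -/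
def IsZFlowDensity {m : ℕ} (β : EuclideanSpace ℝ (Fin m))
    (φ : EuclideanSpace ℝ (Fin m) × ℝ → ℝ) : Prop :=
  ∀ (n : EuclideanSpace ℝ (Fin m)) (a t : ℝ), 0 < a →
    φ (n + (a * (Real.exp t - 1)) • β, a * Real.exp t) = φ (n, a)

/-- The `Z`-flow measure `μ = φ dρ`. -/
noncomputable def muZ {m : ℕ} (φ : EuclideanSpace ℝ (Fin m) × ℝ → ℝ) :
    Measure (EuclideanSpace ℝ (Fin m) × ℝ) :=
  (rhoG m).withDensity (fun x => ENNReal.ofReal (φ x))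

/-- The associated measure `dμ_N(n) = φ(n,1) dn` on `ℝ^m`. -/
noncomputable def muN {m : ℕ} (φ : EuclideanSpace ℝ (Fin m) × ℝ → ℝ) :
    Measure (EuclideanSpace ℝ (Fin m)) :=
  (volume : Measure (EuclideanSpace ℝ (Fin m))).withDensity
    (fun n => ENNReal.ofReal (φ (n, 1)))

/-- The cylinder `P_{r,E}(a) = { (n + (e^t − 1)β, e^t) : n ∈ E, t ∈ U_r(a) }`, where
`U_r(a) = (log(a/r), log(ar))`. -/
def cylinder {m : ℕ} (β : EuclideanSpace ℝ (Fin m)) (r a : ℝ)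
    (E : Set (EuclideanSpace ℝ (Fin m))) : Set (EuclideanSpace ℝ (Fin m) × ℝ) :=
  {x | ∃ n ∈ E, ∃ t ∈ Set.Ioo (Real.log (a / r)) (Real.log (a * r)),
    x = (n + (Real.exp t - 1) • β, Real.exp t)}

/-- a `Z`-flow measure of a cylinder: `μ(P_{r,E}(a)) = 2 (log r) μ_N(E)`. -/
theorem measure_cylinder (m : ℕ) (hm : 1 ≤ m) (β : EuclideanSpace ℝ (Fin m))
    (φ : EuclideanSpace ℝ (Fin m) × ℝ → ℝ)
    (hφmeas : Measurable φ) (hφnonneg : ∀ x, 0 ≤ φ x)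
    (hflow : IsZFlowDensity β φ)
    (E : Set (EuclideanSpace ℝ (Fin m))) (hE : MeasurableSet E)
    (r a : ℝ) (hr : 1 < r) (ha : 0 < a) :
    muZ φ (cylinder β r a E) = ENNReal.ofReal (2 * Real.log r) * muN φ E := by
  classical
  have hr0 : (0 : ℝ) < r := lt_trans one_pos hr
  have har : 0 < a / r := div_pos ha hr0
  have har' : 0 < a * r := mul_pos ha hr0
  -- Description of the cylinder as a measurable set
  have hcyl : cylinder β r a E =
      {x : EuclideanSpace ℝ (Fin m) × ℝ |
        x.2 ∈ Set.Ioo (a / r) (a * r) ∧ x.1 - (x.2 - 1) • β ∈ E} := by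
    ext ⟨y, s⟩
    constructor
    · rintro ⟨n, hn, t, ⟨ht1, ht2⟩, hx⟩
      obtain ⟨hy, hs⟩ : y = n + (Real.exp t - 1) • β ∧ s = Real.exp t := by
        exact ⟨congrArg Prod.fst hx, congrArg Prod.snd hx⟩
      subst hy hs
      refine ⟨⟨?_, ?_⟩, ?_⟩
      · calc a / r = Real.exp (Real.log (a / r)) := (Real.exp_log har).symm
          _ < Real.exp t := Real.exp_lt_exp.2 ht1
      · calc Real.exp t < Real.exp (Real.log (a * r)) := Real.exp_lt_exp.2 ht2
          _ = a * r := Real.exp_log har'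
      · simpa using hn
    · rintro ⟨⟨h1, h2⟩, hmem⟩
      have hs0 : 0 < s := lt_trans har h1
      refine ⟨y - (s - 1) • β, hmem, Real.log s, ⟨?_, ?_⟩, ?_⟩
      · exact Real.log_lt_log har h1
      · exact Real.log_lt_log hs0 h2
      · rw [Real.exp_log hs0]
        simp
  -- density of rhoG
  set h : EuclideanSpace ℝ (Fin m) × ℝ → ℝ≥0∞ :=
    fun x => if 0 < x.2 then ENNReal.ofReal x.2⁻¹ else 0 with hh
  have hhmeas : Measurable h := by
    apply Measurable.ite (measurableSet_lt measurable_const measurable_snd)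
    · exact measurable_snd.inv.ennreal_ofReal
    · exact measurable_const
  have hgmeas : Measurable fun x : EuclideanSpace ℝ (Fin m) × ℝ =>
      ENNReal.ofReal (φ x) := hφmeas.ennreal_ofReal
  have hmuZ : muZ φ = (volume : Measure (EuclideanSpace ℝ (Fin m) × ℝ)).withDensity
      (fun x => h x * ENNReal.ofReal (φ x)) := by
    rw [muZ, rhoG, ← withDensity_mul _ hhmeas hgmeas]
    rfl
  have hPmeas : MeasurableSet (cylinder β r a E) := by
    rw [hcyl]
    refine (measurable_snd measurableSet_Ioo).inter ?_
    have : Measurable fun x : EuclideanSpace ℝ (Fin m) × ℝ =>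
        x.1 - (x.2 - 1) • β := by
      exact measurable_fst.sub (((measurable_snd.sub measurable_const).smul_const β))
    exact this hE
  -- the integrand after restriction
  rw [hmuZ, withDensity_apply _ hPmeas, ← lintegral_indicator hPmeas]
  -- pointwise rewriting of the indicator
  have hind : ∀ x : EuclideanSpace ℝ (Fin m) × ℝ,
      (cylinder β r a E).indicator (fun x => h x * ENNReal.ofReal (φ x)) x =
      (Set.Ioo (a / r) (a * r)).indicator (fun s => ENNReal.ofReal s⁻¹) x.2 *
        (if x.1 - (x.2 - 1) • β ∈ E then ENNReal.ofReal (φ x) else 0) := by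
    intro x
    by_cases hx : x ∈ cylinder β r a E
    · rw [Set.indicator_of_mem hx]
      rw [hcyl] at hx
      obtain ⟨hs, hm⟩ := hx
      rw [Set.indicator_of_mem hs, if_pos hm, hh]
      have : 0 < x.2 := lt_trans har hs.1
      simp [this]
    · rw [Set.indicator_of_notMem hx]
      rw [hcyl] at hx
      simp only [Set.mem_setOf_eq, not_and_or] at hx
      rcases hx with hx | hx
      · rw [Set.indicator_of_notMem hx, zero_mul]
      · rw [if_neg hx, mul_zero]
  simp only [hind]
  -- Tonelli
  have hFmeas : Measurable fun x : EuclideanSpace ℝ (Fin m) × ℝ =>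
      (Set.Ioo (a / r) (a * r)).indicator (fun s => ENNReal.ofReal s⁻¹) x.2 *
        (if x.1 - (x.2 - 1) • β ∈ E then ENNReal.ofReal (φ x) else 0) := by
    refine Measurable.mul ?_ ?_
    · exact (Measurable.indicator (measurable_inv.ennreal_ofReal) measurableSet_Ioo).comp
        measurable_snd
    · refine Measurable.ite ?_ hgmeas measurable_const
      exact (measurable_fst.sub ((measurable_snd.sub measurable_const).smul_const β)) hE
  rw [Measure.volume_eq_prod, lintegral_prod_symm _ hFmeas.aemeasurable]
  -- inner integral computation
  have hinner : ∀ s : ℝ,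
      (∫⁻ n, (Set.Ioo (a / r) (a * r)).indicator (fun s => ENNReal.ofReal s⁻¹) s *
          (if n - (s - 1) • β ∈ E then ENNReal.ofReal (φ (n, s)) else 0)) =
      (Set.Ioo (a / r) (a * r)).indicator (fun s => ENNReal.ofReal s⁻¹) s * muN φ E := by
    intro s
    rw [lintegral_const_mul]
    swap
    · refine Measurable.ite ?_ (hφmeas.comp (measurable_id.prodMk measurable_const)).ennreal_ofReal
        measurable_const
      exact (measurable_id.sub measurable_const) hE
    by_cases hs : s ∈ Set.Ioo (a / r) (a * r)
    · congr 1
      have hs0 : 0 < s := lt_trans har hs.1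
      have key : ∀ n : EuclideanSpace ℝ (Fin m), n ∈ E →
          φ (n + (s - 1) • β, s) = φ (n, 1) := by
        intro n _
        have := hflow n 1 (Real.log s) one_pos
        rw [Real.exp_log hs0] at this
        simpa using this
      calc (∫⁻ n, if n - (s - 1) • β ∈ E then ENNReal.ofReal (φ (n, s)) else 0)
          = ∫⁻ n, (if (n + (s - 1) • β) - (s - 1) • β ∈ E then
              ENNReal.ofReal (φ (n + (s - 1) • β, s)) else 0) := by
            exact (lintegral_add_right_eq_self
              (fun y => if y - (s - 1) • β ∈ E then ENNReal.ofReal (φ (y, s)) else 0)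
              ((s - 1) • β)).symm
        _ = ∫⁻ n, (if n ∈ E then ENNReal.ofReal (φ (n, 1)) else 0) := by
            congr 1
            funext n
            rw [add_sub_cancel_right]
            by_cases hn : n ∈ E
            · rw [if_pos hn, if_pos hn, key n hn]
            · rw [if_neg hn, if_neg hn]
        _ = ∫⁻ n in E, ENNReal.ofReal (φ (n, 1)) := by
            rw [← lintegral_indicator hE]
            apply lintegral_congr
            intro n
            by_cases hn : n ∈ E
            · rw [Set.indicator_of_mem hn, if_pos hn]
            · rw [Set.indicator_of_notMem hn, if_neg hn]
        _ = muN φ E := by rw [muN, withDensity_apply _ hE]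
    · rw [Set.indicator_of_notMem hs, zero_mul, zero_mul]
  simp only [hinner]
  rw [lintegral_mul_const _ ((Measurable.indicator (measurable_inv.ennreal_ofReal)
    measurableSet_Ioo))]
  congr 1
  -- the one-dimensional integral
  rw [lintegral_indicator measurableSet_Ioo _]
  have hinteg : MeasureTheory.IntegrableOn (fun s : ℝ => s⁻¹) (Set.Ioo (a / r) (a * r)) := by
    have hlt : a / r < a * r := by
      calc a / r < a := by rw [div_lt_iff₀ hr0]; nlinarith
        _ < a * r := by nlinarith
    have : IntervalIntegrable (fun s : ℝ => s⁻¹) volume (a / r) (a * r) := by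
      rw [intervalIntegrable_inv_iff]
      right
      rw [Set.uIcc_of_le hlt.le]
      intro hmem
      exact absurd hmem.1 (not_le.mpr har)
    have h2 := this.1
    rw [MeasureTheory.IntegrableOn] at h2 ⊢
    refine h2.mono_measure ?_
    exact Measure.restrict_mono Set.Ioo_subset_Ioc_self le_rfl
  rw [← MeasureTheory.ofReal_integral_eq_lintegral_ofReal hinteg]
  · congr 1
    rw [← MeasureTheory.integral_Ioc_eq_integral_Ioo,
      ← intervalIntegral.integral_of_le (le_of_lt (by
        calc a / r < a := by rw [div_lt_iff₀ hr0]; nlinarith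
          _ < a * r := by nlinarith))]
    rw [integral_inv_of_pos har har']
    rw [show a * r / (a / r) = r * r by field_simp]
    rw [Real.log_mul (ne_of_gt hr0) (ne_of_gt hr0)]
    ring
  · filter_upwards [MeasureTheory.ae_restrict_mem measurableSet_Ioo] with s hs
    exact le_of_lt (inv_pos.2 (lt_trans har hs.1))
end

section
/- Fix δ ∈ (0,1), γ ≥ 5, λ > e³/δ and C₁ > 0. There exists a constant C₃ > 0, depending only on δ, γ, λ, C₁, with the following property: for every m ≥ 1, every β ∈ ℝ^m, every k ∈ ℤ, r > 1, a > 0 such that (r, a, δ^k) is admissible, every n_Q ∈ ℝ^m and every Q ⊆ B(n_Q, C₁δ^k) (Euclidean ball), one has P_{r,Q}(a) ⊆ { x ∈ G : d_Z(x, (n_Q + (a−1)β, a)) < C₃ log r }. -/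
/-- Admissibility of a triple `(r, a, d)` relative to parameters `δ ∈ (0,1)`, `γ ≥ 5`,
`λ > e³/δ`: either (large case) `r > e` and `a r² ≤ d ≤ λ a r^γ`, or (small case)
`1 < r ≤ e` and `a e² log r ≤ d ≤ λ a e² log r`. -/
def Admissible (γ lam r a d : ℝ) : Prop :=
  (Real.exp 1 < r ∧ a * r ^ (2 : ℕ) ≤ d ∧ d ≤ lam * a * r ^ γ) ∨
  (1 < r ∧ r ≤ Real.exp 1 ∧ a * Real.exp 2 * Real.log r ≤ d ∧
    d ≤ lam * a * Real.exp 2 * Real.log r)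

lemma cosh_le_exp_abs (x : ℝ) : Real.cosh x ≤ Real.exp |x| := by
  rw [Real.cosh_eq]
  have h1 : Real.exp x ≤ Real.exp |x| := Real.exp_le_exp.2 (le_abs_self x)
  have h2 : Real.exp (-x) ≤ Real.exp |x| := Real.exp_le_exp.2 (neg_le_abs x)
  linarith

lemma cosh_quad {x : ℝ} (h : |x| ≤ 1) : Real.cosh x ≤ 1 + 2 * x ^ 2 := by
  rw [← Real.cosh_abs]
  set y := |x| with hy
  have hy0 : 0 ≤ y := abs_nonneg x
  have hx2 : y ^ 2 = x ^ 2 := sq_abs x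
  rw [← hx2]
  rw [Real.cosh_eq]
  set u := Real.exp (y / 2) with hu
  set v := Real.exp (-(y / 2)) with hv
  have hu0 : 0 < u := Real.exp_pos _
  have hv0 : 0 < v := Real.exp_pos _
  have huv : u * v = 1 := by rw [hu, hv, ← Real.exp_add]; simp
  have hu2 : Real.exp y = u ^ 2 := by rw [hu, sq, ← Real.exp_add]; ring_nf
  have hv2 : Real.exp (-y) = v ^ 2 := by rw [hv, sq, ← Real.exp_add]; ring_nf
  have h1u : 1 ≤ u := Real.one_le_exp (by linarith)
  have hvle : v ≤ 1 := by nlinarith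
  have hkey : u ^ 2 - 1 ≤ y * u ^ 2 := by
    have := Real.add_one_le_exp (-y)
    rw [hv2] at this
    nlinarith
  have hub : u ^ 2 < 4 := by
    rw [← hu2]
    calc Real.exp y ≤ Real.exp 1 := Real.exp_le_exp.2 h
      _ < 2.7182818286 := Real.exp_one_lt_d9
      _ < 4 := by norm_num
  have hstep : u - v ≤ y * u := by
    have h3 : (u - v) * u = u ^ 2 - 1 := by nlinarith
    have h4 : (u - v) * u ≤ (y * u) * u := by nlinarith
    exact le_of_mul_le_mul_right (by nlinarith) hu0
  have hule : u < 2 := by nlinarith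
  have huvnn : 0 ≤ u - v := by linarith
  have : (u - v) ^ 2 ≤ (2 * y) ^ 2 := by nlinarith
  rw [hu2, hv2]
  nlinarith

lemma arcosh_le_log {x y : ℝ} (hx : 1 ≤ x) (hxy : x ≤ y) : arcosh x ≤ Real.log (2 * y) := by
  unfold arcosh
  have h1 : Real.sqrt (x ^ 2 - 1) ≤ x := by
    calc Real.sqrt (x ^ 2 - 1) ≤ Real.sqrt (x ^ 2) := Real.sqrt_le_sqrt (by nlinarith)
      _ = x := Real.sqrt_sq (by linarith)
  exact Real.log_le_log (by linarith [Real.sqrt_nonneg (x ^ 2 - 1)]) (by linarith)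

lemma arcosh_le_small {x u : ℝ} (hx : 1 ≤ x) (hxu : x ≤ 1 + u) :
    arcosh x ≤ 2 * u + Real.sqrt (2 * u) := by
  have hu0 : 0 ≤ u := by linarith
  have hs0 : 0 ≤ Real.sqrt (2 * u) := Real.sqrt_nonneg _
  have hs2 : Real.sqrt (2 * u) ^ 2 = 2 * u := Real.sq_sqrt (by linarith)
  have h1 : Real.sqrt (x ^ 2 - 1) ≤ u + Real.sqrt (2 * u) := by
    calc Real.sqrt (x ^ 2 - 1) ≤ Real.sqrt ((u + Real.sqrt (2 * u)) ^ 2) := by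
          apply Real.sqrt_le_sqrt; nlinarith
      _ = u + Real.sqrt (2 * u) := Real.sqrt_sq (by positivity)
  have h3 : 0 < x + Real.sqrt (x ^ 2 - 1) := by linarith [Real.sqrt_nonneg (x ^ 2 - 1)]
  calc arcosh x ≤ (x + Real.sqrt (x ^ 2 - 1)) - 1 := Real.log_le_sub_one_of_pos h3
    _ ≤ 2 * u + Real.sqrt (2 * u) := by linarith

lemma aux_div1 {N M a r E : ℝ} (hN : 0 ≤ N) (hNM : N ≤ M) (ha : 0 < a) (hr : 0 < r)
    (hE : a / r < E) : N ^ 2 / (2 * E * a) ≤ M ^ 2 * r / (2 * a ^ 2) := by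
  have hE0 : 0 < E := lt_trans (by positivity) hE
  have h2 : a ≤ r * E := by rw [div_lt_iff₀ hr] at hE; linarith only [hE]
  have h1 : N ^ 2 ≤ M ^ 2 := by nlinarith only [hN, hNM]
  rw [div_le_div_iff₀ (by positivity) (by positivity)]
  have h3 : N ^ 2 * a ≤ M ^ 2 * (r * E) := mul_le_mul h1 h2 ha.le (sq_nonneg M)
  have h4 : (2 * a) * (N ^ 2 * a) ≤ (2 * a) * (M ^ 2 * (r * E)) :=
    mul_le_mul_of_nonneg_left h3 (by linarith only [ha])
  linarith only [h4]

lemma aux_div2 {W Z a : ℝ} (ha : 0 < a) (h : W ≤ Z * a ^ 2) : W / (2 * a ^ 2) ≤ Z / 2 := by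
  rw [div_le_div_iff₀ (by positivity) (by norm_num)]
  linarith only [h]

set_option maxHeartbeats 800000 in
/-- there is a constant `C₃ > 0`, depending only on `δ, γ, λ, C₁`, such that
every admissible cylinder `P_{r,Q}(a)` with base `Q ⊆ B(n_Q, C₁ δ^k)` is contained in the
`d_Z`-ball of center `(n_Q + (a−1)β, a)` and radius `C₃ log r`. -/
theorem cylinder_subset_ball (δ γ lam C₁ : ℝ) (hδ₀ : 0 < δ) (hδ₁ : δ < 1) (hγ : 5 ≤ γ)
    (hlam : Real.exp 3 / δ < lam) (hC₁ : 0 < C₁) :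
    ∃ C₃ : ℝ, 0 < C₃ ∧
      ∀ (m : ℕ), 1 ≤ m → ∀ (β : EuclideanSpace ℝ (Fin m)) (k : ℤ) (r a : ℝ),
        1 < r → 0 < a → Admissible γ lam r a (δ ^ k) →
        ∀ (nQ : EuclideanSpace ℝ (Fin m)) (Q : Set (EuclideanSpace ℝ (Fin m))),
          Q ⊆ Metric.ball nQ (C₁ * δ ^ k) →
          cylinder β r a Q ⊆
            {x | dZ β x (nQ + (a - 1) • β, a) < C₃ * Real.log r} := by
  have hlam0 : 0 < lam := lt_trans (by positivity) hlam
  set K₁ : ℝ := 1 + C₁ ^ 2 * lam ^ 2 / 2 with hK₁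
  set K₂ : ℝ := 2 + C₁ ^ 2 * lam ^ 2 * Real.exp 2 ^ 2 * Real.exp 1 / 2 with hK₂
  have hK₁1 : 1 ≤ K₁ := by
    have h0 : 0 ≤ C₁ ^ 2 * lam ^ 2 / 2 := by positivity
    rw [hK₁]; linarith only [h0]
  have hK₂2 : 2 ≤ K₂ := by
    have h0 : 0 ≤ C₁ ^ 2 * lam ^ 2 * Real.exp 2 ^ 2 * Real.exp 1 / 2 := by positivity
    rw [hK₂]; linarith only [h0]
  set A : ℝ := Real.log (2 * K₁) + 2 * γ + 1 with hAdef
  set B : ℝ := 2 * K₂ + Real.sqrt (2 * K₂) with hBdef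
  have hlogK : 0 ≤ Real.log (2 * K₁) := Real.log_nonneg (by linarith only [hK₁1])
  have hA : 0 < A := by rw [hAdef]; linarith only [hlogK, hγ]
  have hB : 0 < B := by rw [hBdef]; linarith only [Real.sqrt_nonneg (2 * K₂), hK₂2]
  refine ⟨A + B, by linarith only [hA, hB], ?_⟩
  intro m hm β k r a hr ha hadm nQ Q hQ x hx
  obtain ⟨n, hn, t, ht, rfl⟩ := hx
  have hr0 : 0 < r := lt_trans one_pos hr
  have hL : 0 < Real.log r := Real.log_pos hr
  set L : ℝ := Real.log r with hLdef
  have het : 0 < Real.exp t := Real.exp_pos t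
  simp only [Set.mem_setOf_eq]
  have hdz : dZ β (n + (Real.exp t - 1) • β, Real.exp t) (nQ + (a - 1) • β, a)
      = arcosh (Real.cosh (t - Real.log a) + ‖n - nQ‖ ^ 2 / (2 * Real.exp t * a)) := by
    simp only [dZ, dG, add_sub_cancel_right]
    rw [Real.log_div (Real.exp_ne_zero t) (ne_of_gt ha), Real.log_exp]
  rw [hdz]
  -- basic bounds
  have hnorm : ‖n - nQ‖ < C₁ * δ ^ k := by
    have := hQ hn; rwa [Metric.mem_ball, dist_eq_norm] at this
  have hδk : 0 < (δ : ℝ) ^ k := zpow_pos hδ₀ k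
  have hnn : 0 ≤ ‖n - nQ‖ := norm_nonneg _
  obtain ⟨ht1, ht2⟩ := ht
  rw [Real.log_div (ne_of_gt ha) (ne_of_gt hr0)] at ht1
  rw [Real.log_mul (ne_of_gt ha) (ne_of_gt hr0)] at ht2
  have hs : |t - Real.log a| < L := by
    rw [abs_lt]; exact ⟨by linarith only [ht1], by linarith only [ht2]⟩
  have har : 0 < a / r := by positivity
  have hexp_lb : a / r < Real.exp t := by
    rw [← Real.exp_log har]
    apply Real.exp_lt_exp.2
    rw [Real.log_div (ne_of_gt ha) (ne_of_gt hr0)]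
    linarith only [ht1]
  have hBd0 : 0 ≤ ‖n - nQ‖ ^ 2 / (2 * Real.exp t * a) := by positivity
  have hBd : ‖n - nQ‖ ^ 2 / (2 * Real.exp t * a) ≤ (C₁ * δ ^ k) ^ 2 * r / (2 * a ^ 2) :=
    aux_div1 hnn hnorm.le ha hr0 hexp_lb
  have hX1 : 1 ≤ Real.cosh (t - Real.log a) + ‖n - nQ‖ ^ 2 / (2 * Real.exp t * a) := by
    linarith only [Real.one_le_cosh (t - Real.log a), hBd0]
  rcases hadm with ⟨hre, _, h2⟩ | ⟨_, hre, _, h2⟩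
  · -- large case : exp 1 < r, δ^k ≤ lam * a * r ^ γ
    have hL1 : 1 < L := by
      rw [hLdef, ← Real.log_exp 1]
      exact Real.log_lt_log (Real.exp_pos 1) hre
    have hrγ : 1 ≤ r ^ γ := Real.one_le_rpow (le_of_lt hr) (by linarith only [hγ])
    have hc : Real.cosh (t - Real.log a) ≤ r := by
      calc Real.cosh (t - Real.log a) ≤ Real.exp |t - Real.log a| := cosh_le_exp_abs _
        _ ≤ Real.exp L := Real.exp_le_exp.2 hs.le
        _ = r := Real.exp_log hr0
    have hsq : (δ ^ k) ^ 2 ≤ (lam * a * r ^ γ) ^ 2 := pow_le_pow_left₀ hδk.le h2 2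
    have h3 : (C₁ * δ ^ k) ^ 2 * r ≤ (C₁ ^ 2 * lam ^ 2 * (r ^ γ) ^ 2 * r) * a ^ 2 := by
      have h4 := mul_le_mul_of_nonneg_right hsq (by positivity : (0:ℝ) ≤ C₁ ^ 2 * r)
      linarith only [h4]
    have hBd2 : ‖n - nQ‖ ^ 2 / (2 * Real.exp t * a)
        ≤ C₁ ^ 2 * lam ^ 2 * (r ^ γ) ^ 2 * r / 2 :=
      le_trans hBd (aux_div2 ha h3)
    have hrr : (0:ℝ) ≤ ((r ^ γ) ^ 2 - 1) * r :=
      mul_nonneg (by nlinarith only [hrγ]) hr0.le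
    have hXle : Real.cosh (t - Real.log a) + ‖n - nQ‖ ^ 2 / (2 * Real.exp t * a)
        ≤ K₁ * ((r ^ γ) ^ 2 * r) := by
      rw [hK₁]; linarith only [hc, hBd2, hrr]
    calc arcosh (Real.cosh (t - Real.log a) + ‖n - nQ‖ ^ 2 / (2 * Real.exp t * a))
        ≤ Real.log (2 * (K₁ * ((r ^ γ) ^ 2 * r))) := arcosh_le_log hX1 hXle
      _ = Real.log (2 * K₁) + 2 * (γ * L) + L := by
          rw [show 2 * (K₁ * ((r ^ γ) ^ 2 * r)) = 2 * K₁ * (r ^ γ) ^ 2 * r from by ring]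
          rw [Real.log_mul (by positivity) (ne_of_gt hr0),
            Real.log_mul (by positivity) (by positivity),
            Real.log_pow, Real.log_rpow hr0]
          push_cast; ring
      _ < (A + B) * L := by
          rw [hAdef, hBdef]
          have e1 : 0 ≤ Real.log (2 * K₁) * (L - 1) :=
            mul_nonneg hlogK (by linarith only [hL1])
          have e2 : 0 < K₂ * L := mul_pos (by linarith only [hK₂2]) hL
          have e3 : 0 ≤ Real.sqrt (2 * K₂) * L :=
            mul_nonneg (Real.sqrt_nonneg (2 * K₂)) hL.le
          nlinarith only [e1, e2, e3]
  · -- small case : r ≤ exp 1, δ^k ≤ lam * a * exp 2 * log r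
    have hrle : r ≤ Real.exp 1 := hre
    have hLle1 : L ≤ 1 := by
      rw [hLdef, ← Real.log_exp 1]
      exact Real.log_le_log hr0 hre
    have hs1 : |t - Real.log a| ≤ 1 := by linarith only [hs, hLle1]
    have hs2 : (t - Real.log a) ^ 2 ≤ L ^ 2 := by
      nlinarith only [hs, abs_nonneg (t - Real.log a), sq_abs (t - Real.log a), hL]
    have hc : Real.cosh (t - Real.log a) ≤ 1 + 2 * L ^ 2 := by
      linarith only [cosh_quad hs1, hs2]
    have hsq : (δ ^ k) ^ 2 ≤ (lam * a * Real.exp 2 * L) ^ 2 := pow_le_pow_left₀ hδk.le h2 2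
    have h3 : (C₁ * δ ^ k) ^ 2 * r
        ≤ (C₁ ^ 2 * lam ^ 2 * Real.exp 2 ^ 2 * Real.exp 1 * L ^ 2) * a ^ 2 := by
      have h4 := mul_le_mul_of_nonneg_left
        (mul_le_mul hsq hrle hr0.le (by positivity)) (sq_nonneg C₁)
      linarith only [h4]
    have hBd2 : ‖n - nQ‖ ^ 2 / (2 * Real.exp t * a)
        ≤ C₁ ^ 2 * lam ^ 2 * Real.exp 2 ^ 2 * Real.exp 1 * L ^ 2 / 2 :=
      le_trans hBd (aux_div2 ha h3)
    have hXle : Real.cosh (t - Real.log a) + ‖n - nQ‖ ^ 2 / (2 * Real.exp t * a)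
        ≤ 1 + K₂ * L ^ 2 := by
      have hKe : K₂ * L ^ 2
          = 2 * L ^ 2 + C₁ ^ 2 * lam ^ 2 * Real.exp 2 ^ 2 * Real.exp 1 * L ^ 2 / 2 := by
        rw [hK₂]; ring
      linarith only [hc, hBd2, hKe]
    have hsqrt : Real.sqrt (2 * (K₂ * L ^ 2)) = Real.sqrt (2 * K₂) * L := by
      rw [show 2 * (K₂ * L ^ 2) = (2 * K₂) * L ^ 2 from by ring,
        Real.sqrt_mul (by linarith only [hK₂2]) (L ^ 2), Real.sqrt_sq hL.le]
    calc arcosh (Real.cosh (t - Real.log a) + ‖n - nQ‖ ^ 2 / (2 * Real.exp t * a))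
        ≤ 2 * (K₂ * L ^ 2) + Real.sqrt (2 * (K₂ * L ^ 2)) := arcosh_le_small hX1 hXle
      _ ≤ B * L := by
          rw [hsqrt, hBdef]
          have hLL : 0 ≤ L - L ^ 2 := by
            nlinarith only [mul_nonneg hL.le (by linarith only [hLle1] : (0:ℝ) ≤ 1 - L)]
          have h5 : 0 ≤ (2 * K₂) * (L - L ^ 2) :=
            mul_nonneg (by linarith only [hK₂2]) hLL
          nlinarith only [h5]
      _ < (A + B) * L := by
          have := mul_pos hA hL
          nlinarith only [this]
end
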